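/- The total number of parts over all integer partitions λ satisfying ℓ(λ) + λ_1 + 1 ≤ n (i.e., fitting in an s×t box with s + t ≤ n − 1) equals (n-2)·2^(n-3) for n ≥ 3. -/

import Mathlib

/-- A restricted growth function of length `n`: `w 0 = 1` and each later entry is
at most one more than the maximum of the preceding entries. -/
def IsRGF {n : ℕ} (w : Fin n → ℕ) : Prop :=
  (∀ i : Fin n, (i : ℕ) = 0 → w i = 1) ∧
  (∀ i : Fin n, 0 < (i : ℕ) →
    w i ≤ 1 + (Finset.univ.filter (fun j : Fin n => j < i)).sup w)

/-- Number of copies of the pattern 112 in `w`. -/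
def copies112 {n : ℕ} (w : Fin n → ℕ) : ℕ :=
  ((Finset.univ : Finset (Fin n × Fin n × Fin n)).filter
    (fun t => t.1 < t.2.1 ∧ t.2.1 < t.2.2 ∧ w t.1 = w t.2.1 ∧ w t.2.1 < w t.2.2)).card

/-- Number of copies of the pattern 122 in `w`. -/
def copies122 {n : ℕ} (w : Fin n → ℕ) : ℕ :=
  ((Finset.univ : Finset (Fin n × Fin n × Fin n)).filter
    (fun t => t.1 < t.2.1 ∧ t.2.1 < t.2.2 ∧ w t.1 < w t.2.1 ∧ w t.2.1 = w t.2.2)).card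

/-- `ls` statistic: for each position, the number of distinct values to its left
that are smaller, summed over all positions. -/
def lsStat {n : ℕ} (w : Fin n → ℕ) : ℕ :=
  ∑ i : Fin n, ((Finset.univ.filter (fun j : Fin n => j < i ∧ w j < w i)).image w).card

/-- `rb` statistic: distinct values to the right that are bigger, summed. -/
def rbStat {n : ℕ} (w : Fin n → ℕ) : ℕ :=
  ∑ i : Fin n, ((Finset.univ.filter (fun j : Fin n => i < j ∧ w i < w j)).image w).card

/-- `lb` statistic: distinct values to the left that are bigger, summed. -/
def lbStat {n : ℕ} (w : Fin n → ℕ) : ℕ :=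
  ∑ i : Fin n, ((Finset.univ.filter (fun j : Fin n => j < i ∧ w i < w j)).image w).card

open Finset in
lemma card_sym_finset {α : Type*} [DecidableEq α] (s : Finset α) (k : ℕ) :
    (s.sym k).card = Nat.multichoose s.card k := by
  classical
  have himg : s.sym k = Finset.image (Sym.map (Subtype.val : {x // x ∈ s} → α)) Finset.univ := by
    ext m
    simp only [Finset.mem_sym_iff, Finset.mem_image, Finset.mem_univ, true_and]
    constructor
    · intro h
      refine ⟨Sym.map (fun x : {a // a ∈ m} => (⟨x.1, h x.1 x.2⟩ : {x // x ∈ s}))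
        m.attach, ?_⟩
      rw [Sym.map_map]
      have := m.attach_map_coe
      convert this using 2
      rfl
    · rintro ⟨m', rfl⟩ a ha
      rw [Sym.mem_map] at ha
      obtain ⟨b, _, rfl⟩ := ha
      exact b.2
  rw [himg, Finset.card_image_of_injective _ (Sym.map_injective Subtype.val_injective _),
    Finset.card_univ, Sym.card_sym_eq_multichoose, Fintype.card_coe]

lemma sum_mul_choose (m : ℕ) :
    ∑ ℓ ∈ Finset.range (m + 2), ℓ * (m + 1).choose ℓ = (m + 1) * 2 ^ m := by
  rw [Finset.sum_range_succ']
  simp only [Nat.zero_mul, add_zero]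
  have : ∀ j, (j + 1) * (m + 1).choose (j + 1) = (m + 1) * m.choose j := by
    intro j
    rw [Nat.add_one_mul_choose_eq m j, mul_comm]
  simp_rw [this]
  rw [← Finset.mul_sum, Nat.sum_range_choose]

/-- The total number of parts over all partitions `λ` (encoded as multisets of
positive integers) with `ℓ(λ) + λ₁ + 1 ≤ n` equals `(n-2)·2^(n-3)` for `n ≥ 3`.
The count of parts is realized as the number of pairs `(λ, i)` with `1 ≤ i ≤ ℓ(λ)`. -/
theorem stmt_12 (n : ℕ) (hn : 3 ≤ n) :
    {p : Multiset ℕ × ℕ | (∀ x ∈ p.1, 0 < x) ∧ Multiset.card p.1 + p.1.sup + 1 ≤ n ∧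
        1 ≤ p.2 ∧ p.2 ≤ Multiset.card p.1}.ncard = (n - 2) * 2 ^ (n - 3) := by
  obtain ⟨k, rfl⟩ : ∃ k, n = k + 3 := ⟨n - 3, by omega⟩
  classical
  set F : Finset (Multiset ℕ × ℕ) := (Finset.Icc 1 (k + 1)).biUnion (fun ℓ =>
    (((Finset.Icc 1 (k + 2 - ℓ)).sym ℓ).image Sym.toMultiset) ×ˢ Finset.Icc 1 ℓ) with hF
  have hset : {p : Multiset ℕ × ℕ | (∀ x ∈ p.1, 0 < x) ∧
      Multiset.card p.1 + p.1.sup + 1 ≤ k + 3 ∧ 1 ≤ p.2 ∧ p.2 ≤ Multiset.card p.1} = ↑F := by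
    ext ⟨p, i⟩
    simp only [Set.mem_setOf_eq, hF, Finset.coe_biUnion, Finset.mem_coe, Finset.mem_biUnion,
      Finset.mem_product, Finset.mem_image, Finset.mem_Icc, Finset.mem_sym_iff, Set.mem_iUnion]
    constructor
    · rintro ⟨hpos, hbox, hi1, hi2⟩
      have hp0 : p ≠ 0 := by
        intro h; rw [h] at hi2; simp at hi2; omega
      obtain ⟨x, hx⟩ := Multiset.exists_mem_of_ne_zero hp0
      have hsup1 : 1 ≤ p.sup := le_trans (hpos x hx) (Multiset.le_sup hx)
      refine ⟨Multiset.card p, ⟨⟨by omega, by omega⟩, ⟨⟨⟨p, rfl⟩, ?_, rfl⟩, hi1, hi2⟩⟩⟩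
      intro a ha
      have ha' : a ∈ p := ha
      have h1 := hpos a ha'
      have h2 := Multiset.le_sup ha'
      exact ⟨h1, by omega⟩
    · rintro ⟨ℓ, ⟨⟨hℓ1, hℓ2⟩, ⟨⟨s, hs, rfl⟩, hi1, hi2⟩⟩⟩
      have hcard : Multiset.card (Sym.toMultiset s) = ℓ := s.2
      have hmem : ∀ x ∈ Sym.toMultiset s, 1 ≤ x ∧ x ≤ k + 2 - ℓ := by
        intro x hx
        exact hs x hx
      have hsup : (Sym.toMultiset s).sup ≤ k + 2 - ℓ :=
        Multiset.sup_le.2 fun x hx => (hmem x hx).2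
      exact ⟨fun x hx => (hmem x hx).1, by omega, hi1, by omega⟩
  rw [hset, Set.ncard_coe_finset]
  have hdisj : ∀ ℓ₁ ∈ Finset.Icc 1 (k + 1), ∀ ℓ₂ ∈ Finset.Icc 1 (k + 1), ℓ₁ ≠ ℓ₂ →
      Disjoint ((((Finset.Icc 1 (k + 2 - ℓ₁)).sym ℓ₁).image Sym.toMultiset) ×ˢ Finset.Icc 1 ℓ₁)
        ((((Finset.Icc 1 (k + 2 - ℓ₂)).sym ℓ₂).image Sym.toMultiset) ×ˢ Finset.Icc 1 ℓ₂) := by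
    intro ℓ₁ _ ℓ₂ _ hne
    rw [Finset.disjoint_left]
    rintro ⟨p, i⟩ h1 h2
    rw [Finset.mem_product, Finset.mem_image] at h1 h2
    obtain ⟨⟨s1, _, hs1⟩, _⟩ := h1
    obtain ⟨⟨s2, _, hs2⟩, _⟩ := h2
    have hc1 : Multiset.card (Sym.toMultiset s1) = ℓ₁ := s1.2
    have hc2 : Multiset.card (Sym.toMultiset s2) = ℓ₂ := s2.2
    rw [hs1] at hc1
    rw [hs2] at hc2
    exact hne (hc1 ▸ hc2 ▸ rfl)
  rw [hF, Finset.card_biUnion hdisj]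
  have hterm : ∀ ℓ ∈ Finset.Icc 1 (k + 1),
      ((((Finset.Icc 1 (k + 2 - ℓ)).sym ℓ).image Sym.toMultiset) ×ˢ Finset.Icc 1 ℓ).card
        = ℓ * (k + 1).choose ℓ := by
    intro ℓ hℓ
    rw [Finset.mem_Icc] at hℓ
    rw [Finset.card_product, Finset.card_image_of_injective _ Sym.coe_injective,
      card_sym_finset, Nat.card_Icc, Nat.card_Icc, Nat.multichoose_eq]
    have h1 : k + 2 - ℓ + 1 - 1 = k + 2 - ℓ := by omega
    have h2 : k + 2 - ℓ + ℓ - 1 = k + 1 := by omega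
    rw [h1, h2, Nat.add_sub_cancel, mul_comm]
  rw [Finset.sum_congr rfl hterm]
  have : ∑ ℓ ∈ Finset.Icc 1 (k + 1), ℓ * (k + 1).choose ℓ
      = ∑ ℓ ∈ Finset.range (k + 2), ℓ * (k + 1).choose ℓ := by
    refine Finset.sum_subset ?_ ?_
    · intro x hx
      simp only [Finset.mem_Icc] at hx
      simp only [Finset.mem_range]
      omega
    · intro x hx hnx
      simp only [Finset.mem_range] at hx
      simp only [Finset.mem_Icc, not_and_or, not_le] at hnx
      have : x = 0 := by omega
      simp [this]
  rw [this, sum_mul_choose]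
  simp
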